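/- Let H = (V,E,w) be an edge-weighted hypergraph with |V| ≥ 2 and let g ∈ ℝ^V be a nonzero vector with g ⊥_w 1 and D_w(g) = γ. Then there exists a nonzero h ∈ ℝ^V with h ⊥_w 1, D_w(h) ≤ 4γ, h_u ≥ −1/w(V) for every u ∈ V, and Σ_{u ∈ V} w_u |h_u| ≥ 1/2. (Equivalently, the measure vector φ₀ with φ₀(u) = w_u/w(V) + w_u h_u is a probability distribution on V at ℓ₁-distance at least 1/2 from the stationary distribution u ↦ w_u/w(V).) -/

import Mathlib

open Finset

/-- An edge-weighted hypergraph on a finite vertex set `V`: a finite set of hyperedges,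
each a nonempty subset of `V`, with positive weights. -/
structure EWHypergraph (V : Type*) [Fintype V] [DecidableEq V] where
  E : Finset (Finset V)
  w : Finset V → ℝ
  edge_nonempty : ∀ e ∈ E, e.Nonempty
  w_pos : ∀ e ∈ E, 0 < w e

namespace EWHypergraph

variable {V : Type*} [Fintype V] [DecidableEq V]

/-- The weight of a vertex: total weight of hyperedges containing it. -/
noncomputable def wv (H : EWHypergraph V) (v : V) : ℝ :=
  ∑ e ∈ H.E.filter (fun e => v ∈ e), H.w e

/-- The weight of a set of vertices. -/
noncomputable def wS (H : EWHypergraph V) (S : Finset V) : ℝ := ∑ v ∈ S, H.wv v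

/-- The boundary of `S`: hyperedges meeting both `S` and its complement. -/
noncomputable def bdry (H : EWHypergraph V) (S : Finset V) : Finset (Finset V) :=
  H.E.filter (fun e => (e ∩ S).Nonempty ∧ (e \ S).Nonempty)

/-- The expansion `φ(S)` of a set of vertices. -/
noncomputable def phi (H : EWHypergraph V) (S : Finset V) : ℝ :=
  (∑ e ∈ H.bdry S, H.w e) / H.wS S

/-- `max_{u,v ∈ e} (f u - f v)^2`. -/
noncomputable def edgeDisc (H : EWHypergraph V) (f : V → ℝ) (e : Finset V) : ℝ :=
  sSup {x : ℝ | ∃ u ∈ e, ∃ v ∈ e, (f u - f v) ^ 2 = x}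

/-- The discrepancy ratio `D_w(f)`. -/
noncomputable def disc (H : EWHypergraph V) (f : V → ℝ) : ℝ :=
  (∑ e ∈ H.E, H.w e * H.edgeDisc f e) / ∑ u : V, H.wv u * f u ^ 2

/-- The weighted inner product `⟨f,g⟩_w`. -/
noncomputable def wip (H : EWHypergraph V) (f g : V → ℝ) : ℝ :=
  ∑ u : V, H.wv u * f u * g u

/-- `γ₂`: infimum of the discrepancy ratio over nonzero `f ⊥_w 1`. -/
noncomputable def gamma2 (H : EWHypergraph V) : ℝ :=
  sInf {x : ℝ | ∃ f : V → ℝ, f ≠ 0 ∧ H.wip f (fun _ => 1) = 0 ∧ H.disc f = x}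

/-- The hypergraph expansion `φ_H`. -/
noncomputable def phiH (H : EWHypergraph V) : ℝ :=
  sInf {x : ℝ | ∃ S : Finset V, S.Nonempty ∧ S ≠ univ ∧
    x = max (H.phi S) (H.phi Sᶜ)}

/-- `ζ_k`: inf over `k`-tuples of nonzero pairwise `w`-orthogonal vectors of the
sup of the discrepancy ratio over nonzero vectors in their span. -/
noncomputable def zeta (H : EWHypergraph V) (k : ℕ) : ℝ :=
  sInf {x : ℝ | ∃ f : Fin k → V → ℝ, (∀ i, f i ≠ 0) ∧
    (∀ i j, i ≠ j → H.wip (f i) (f j) = 0) ∧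
    x = sSup {y : ℝ | ∃ h : V → ℝ, h ≠ 0 ∧
      h ∈ Submodule.span ℝ (Set.range f) ∧ H.disc h = y}}

/-- `ξ_k`: inf over `k`-tuples of nonzero pairwise `w`-orthogonal vectors of the
maximum discrepancy ratio among them. -/
noncomputable def xi (H : EWHypergraph V) (k : ℕ) : ℝ :=
  sInf {x : ℝ | ∃ f : Fin k → V → ℝ, (∀ i, f i ≠ 0) ∧
    (∀ i j, i ≠ j → H.wip (f i) (f j) = 0) ∧
    x = sSup {y : ℝ | ∃ i, H.disc (f i) = y}}

/-- A sequence of procedural minimizers: `f 0` is a nonzero constant vector, each `f i`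
is nonzero and `w`-orthogonal to the previous ones, and attains the infimum of the
discrepancy ratio over nonzero vectors `w`-orthogonal to the previous ones. -/
def IsProcMin (H : EWHypergraph V) {k : ℕ} (f : Fin k → V → ℝ) : Prop :=
  (∀ i, f i ≠ 0) ∧
  (∀ i : Fin k, (i : ℕ) = 0 → ∃ c : ℝ, f i = fun _ => c) ∧
  (∀ i j : Fin k, (j : ℕ) < (i : ℕ) → H.wip (f i) (f j) = 0) ∧
  (∀ i : Fin k, 0 < (i : ℕ) → H.disc (f i) =
    sInf {x : ℝ | ∃ g : V → ℝ, g ≠ 0 ∧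
      (∀ j : Fin k, (j : ℕ) < (i : ℕ) → H.wip g (f j) = 0) ∧ H.disc g = x})

end EWHypergraph


namespace EWHypergraph

variable {V : Type*} [Fintype V] [DecidableEq V]

lemma edgeDisc_eq (H : EWHypergraph V) (f : V → ℝ) {e : Finset V} (he : e.Nonempty) :
    H.edgeDisc f e = (e ×ˢ e).sup' (he.product he) (fun p => (f p.1 - f p.2) ^ 2) := by
  rw [Finset.sup'_eq_csSup_image, edgeDisc]
  congr 1
  ext x
  constructor
  · rintro ⟨u, hu, v, hv, rfl⟩
    exact ⟨(u, v), by simp [Finset.mem_product, hu, hv]⟩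
  · rintro ⟨⟨u, v⟩, hp, rfl⟩
    simp only [Finset.coe_product, Set.mem_prod, Finset.mem_coe] at hp
    exact ⟨u, hp.1, v, hp.2, rfl⟩

lemma edgeDisc_nonneg (H : EWHypergraph V) (f : V → ℝ) {e : Finset V} (he : e.Nonempty) :
    0 ≤ H.edgeDisc f e := by
  obtain ⟨u, hu⟩ := id he
  rw [H.edgeDisc_eq f he]
  have := Finset.le_sup' (fun p : V × V => (f p.1 - f p.2) ^ 2)
    (Finset.mem_product.mpr ⟨hu, hu⟩ : (u, u) ∈ e ×ˢ e)
  exact le_trans (by simp) this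

lemma edgeDisc_le (H : EWHypergraph V) {f g : V → ℝ} {e : Finset V} (he : e.Nonempty)
    (hfg : ∀ u ∈ e, ∀ v ∈ e, (f u - f v) ^ 2 ≤ (g u - g v) ^ 2) :
    H.edgeDisc f e ≤ H.edgeDisc g e := by
  rw [H.edgeDisc_eq f he, H.edgeDisc_eq g he]
  apply Finset.sup'_le
  rintro ⟨u, v⟩ hp
  rw [Finset.mem_product] at hp
  exact le_trans (hfg u hp.1 v hp.2)
    (Finset.le_sup' (fun p : V × V => (g p.1 - g p.2) ^ 2) (Finset.mem_product.mpr hp))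

lemma edgeDisc_shift (H : EWHypergraph V) (f : V → ℝ) (c : ℝ) {e : Finset V} (he : e.Nonempty) :
    H.edgeDisc (fun u => f u - c) e = H.edgeDisc f e := by
  rw [H.edgeDisc_eq _ he, H.edgeDisc_eq f he]
  congr 1
  ext p
  ring

lemma edgeDisc_smul (H : EWHypergraph V) (f : V → ℝ) (t : ℝ) {e : Finset V} (he : e.Nonempty) :
    H.edgeDisc (fun u => t * f u) e = t ^ 2 * H.edgeDisc f e := by
  rw [H.edgeDisc_eq _ he, H.edgeDisc_eq f he]
  have hkey : ∀ p : V × V, (t * f p.1 - t * f p.2) ^ 2 = t ^ 2 * (f p.1 - f p.2) ^ 2 := by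
    intro p; ring
  apply le_antisymm
  · apply Finset.sup'_le
    intro p hp
    rw [hkey]
    exact mul_le_mul_of_nonneg_left
      (Finset.le_sup' (fun p : V × V => (f p.1 - f p.2) ^ 2) hp) (sq_nonneg t)
  · obtain ⟨p, hp, hsup⟩ := Finset.exists_mem_eq_sup' (he.product he)
      (fun p : V × V => (f p.1 - f p.2) ^ 2)
    rw [hsup, ← hkey]
    exact Finset.le_sup' (fun p : V × V => (t * f p.1 - t * f p.2) ^ 2) hp

lemma num_nonneg (H : EWHypergraph V) (f : V → ℝ) :
    0 ≤ ∑ e ∈ H.E, H.w e * H.edgeDisc f e :=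
  Finset.sum_nonneg fun e he => mul_nonneg (H.w_pos e he).le
    (H.edgeDisc_nonneg f (H.edge_nonempty e he))

lemma num_le (H : EWHypergraph V) {f g : V → ℝ}
    (hfg : ∀ u v, (f u - f v) ^ 2 ≤ (g u - g v) ^ 2) :
    ∑ e ∈ H.E, H.w e * H.edgeDisc f e ≤ ∑ e ∈ H.E, H.w e * H.edgeDisc g e :=
  Finset.sum_le_sum fun e he => mul_le_mul_of_nonneg_left
    (H.edgeDisc_le (H.edge_nonempty e he) fun u _ v _ => hfg u v) (H.w_pos e he).le

lemma den_pos (H : EWHypergraph V) (hw : ∀ v : V, 0 < H.wv v) {f : V → ℝ} (hf : f ≠ 0) :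
    0 < ∑ u : V, H.wv u * f u ^ 2 := by
  obtain ⟨u, hu⟩ := Function.ne_iff.mp hf
  refine Finset.sum_pos' (fun v _ => mul_nonneg (hw v).le (sq_nonneg _)) ⟨u, Finset.mem_univ u, ?_⟩
  exact mul_pos (hw u) (sq_pos_of_ne_zero hu)

lemma disc_smul (H : EWHypergraph V) (f : V → ℝ) {t : ℝ} (ht : t ≠ 0) :
    H.disc (fun u => t * f u) = H.disc f := by
  unfold disc
  have h1 : ∑ e ∈ H.E, H.w e * H.edgeDisc (fun u => t * f u) e
      = t ^ 2 * ∑ e ∈ H.E, H.w e * H.edgeDisc f e := by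
    rw [Finset.mul_sum]
    refine Finset.sum_congr rfl fun e he => ?_
    rw [H.edgeDisc_smul f t (H.edge_nonempty e he)]; ring
  have h2 : ∑ u : V, H.wv u * (t * f u) ^ 2 = t ^ 2 * ∑ u : V, H.wv u * f u ^ 2 := by
    rw [Finset.mul_sum]
    exact Finset.sum_congr rfl fun u _ => by ring
  rw [h1, h2, mul_div_mul_left _ _ (pow_ne_zero 2 ht)]

end EWHypergraph

set_option maxHeartbeats 1000000 in
/-- Construction of a far-from-stationary probability distribution: from a nonzero
`g ⊥_w 1` with `D_w(g) = γ`, one obtains a nonzero `h ⊥_w 1` with `D_w(h) ≤ 4γ`,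
`h_u ≥ −1/w(V)` for all `u`, and `Σ_u w_u |h_u| ≥ 1/2`. -/
theorem initial_distribution_construction {V : Type*} [Fintype V] [DecidableEq V]
    (H : EWHypergraph V) (hV : 2 ≤ Fintype.card V) (hw : ∀ v : V, 0 < H.wv v)
    (g : V → ℝ) (hg : g ≠ 0) (horth : H.wip g (fun _ => 1) = 0)
    (γ : ℝ) (hγ : H.disc g = γ) :
    ∃ h : V → ℝ, h ≠ 0 ∧ H.wip h (fun _ => 1) = 0 ∧ H.disc h ≤ 4 * γ ∧
      (∀ u : V, -(1 / H.wS Finset.univ) ≤ h u) ∧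
      1 / 2 ≤ ∑ u : V, H.wv u * |h u| := by
  classical
  have hVne : Nonempty V := Fintype.card_pos_iff.mp (by omega)
  have hune : (Finset.univ : Finset V).Nonempty := Finset.univ_nonempty
  set W : ℝ := H.wS Finset.univ with hWdef
  have hWsum : W = ∑ u : V, H.wv u := rfl
  have hWpos : 0 < W := by
    rw [hWsum]; exact Finset.sum_pos (fun v _ => hw v) hune
  have hdeng : 0 < ∑ u : V, H.wv u * g u ^ 2 := H.den_pos hw hg
  have hγeq : γ = (∑ e ∈ H.E, H.w e * H.edgeDisc g e) / ∑ u : V, H.wv u * g u ^ 2 := by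
    rw [← hγ]; rfl
  have horth' : ∑ u : V, H.wv u * g u = 0 := by
    simpa [EWHypergraph.wip] using horth
  -- weighted median
  obtain ⟨c, hc1, hc2⟩ : ∃ c : ℝ,
      (∑ u ∈ univ.filter (fun u => c < g u), H.wv u) ≤ W / 2 ∧
      (∑ u ∈ univ.filter (fun u => g u < c), H.wv u) ≤ W / 2 := by
    set vals := Finset.univ.image g with hvals
    have hvne : vals.Nonempty := hune.image g
    set T := vals.filter (fun t => W / 2 ≤ ∑ u ∈ univ.filter (fun u => g u ≤ t), H.wv u)
      with hT
    have hTne : T.Nonempty := by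
      refine ⟨vals.max' hvne, Finset.mem_filter.mpr ⟨vals.max'_mem hvne, ?_⟩⟩
      have hfull : univ.filter (fun u => g u ≤ vals.max' hvne) = univ := by
        ext u
        simp only [Finset.mem_filter, Finset.mem_univ, true_and, iff_true]
        exact Finset.le_max' _ _ (Finset.mem_image_of_mem g (Finset.mem_univ u))
      rw [hfull, ← hWsum]; linarith
    set c := T.min' hTne with hc
    have hcT : c ∈ T := T.min'_mem hTne
    have hcsum : W / 2 ≤ ∑ u ∈ univ.filter (fun u => g u ≤ c), H.wv u :=
      (Finset.mem_filter.mp hcT).2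
    have hsplit : (∑ u ∈ univ.filter (fun u => g u ≤ c), H.wv u)
        + (∑ u ∈ univ.filter (fun u => c < g u), H.wv u) = W := by
      have := Finset.sum_filter_add_sum_filter_not univ (fun u => g u ≤ c) H.wv
      rw [hWsum]
      simpa [not_le] using this
    refine ⟨c, by linarith, ?_⟩
    by_cases hne : (univ.filter (fun u => g u < c)).Nonempty
    · set t := ((univ.filter (fun u => g u < c)).image g).max' (hne.image g) with htdef
      obtain ⟨u0, hu0, hgu0⟩ := Finset.mem_image.mp
        (((univ.filter (fun u => g u < c)).image g).max'_mem (hne.image g))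
      have htc : t < c := by
        rw [htdef, ← hgu0]; exact (Finset.mem_filter.mp hu0).2
      have htvals : t ∈ vals := by
        rw [htdef, ← hgu0]; exact Finset.mem_image_of_mem g (Finset.mem_univ u0)
      have htT : t ∉ T := by
        intro hmem
        exact absurd (T.min'_le t hmem) (by rw [← hc]; linarith)
      have htlt : ∑ u ∈ univ.filter (fun u => g u ≤ t), H.wv u < W / 2 := by
        by_contra hcon
        exact htT (Finset.mem_filter.mpr ⟨htvals, by linarith⟩)
      have hsub : univ.filter (fun u => g u < c) ⊆ univ.filter (fun u => g u ≤ t) := by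
        intro u hu
        refine Finset.mem_filter.mpr ⟨Finset.mem_univ u, ?_⟩
        exact Finset.le_max' _ _ (Finset.mem_image_of_mem g hu)
      have := Finset.sum_le_sum_of_subset_of_nonneg hsub (fun u _ _ => (hw u).le)
      linarith
    · rw [Finset.not_nonempty_iff_eq_empty.mp hne, Finset.sum_empty]
      linarith
  -- positive and negative parts of g - c
  set p : V → ℝ := fun u => max (g u - c) 0 with hpdef
  set q : V → ℝ := fun u => max (c - g u) 0 with hqdef
  have hp0 : ∀ u, 0 ≤ p u := fun u => le_max_right _ _
  have hq0 : ∀ u, 0 ≤ q u := fun u => le_max_right _ _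
  have hpq_sq : ∀ u, p u ^ 2 + q u ^ 2 = (g u - c) ^ 2 := by
    intro u
    rcases le_total (g u) c with h | h
    · have h1 : p u = 0 := max_eq_right (by linarith)
      have h2 : q u = c - g u := max_eq_left (by linarith)
      rw [h1, h2]; ring
    · have h1 : p u = g u - c := max_eq_left (by linarith)
      have h2 : q u = 0 := max_eq_right (by linarith)
      rw [h1, h2]; ring
  have hdengc : ∑ u : V, H.wv u * (g u - c) ^ 2
      = (∑ u : V, H.wv u * g u ^ 2) + c ^ 2 * W := by
    calc ∑ u : V, H.wv u * (g u - c) ^ 2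
        = ∑ u : V, (H.wv u * g u ^ 2 - 2 * c * (H.wv u * g u) + c ^ 2 * H.wv u) :=
          Finset.sum_congr rfl fun u _ => by ring
      _ = (∑ u : V, H.wv u * g u ^ 2) - 2 * c * (∑ u : V, H.wv u * g u)
            + c ^ 2 * (∑ u : V, H.wv u) := by
          rw [Finset.sum_add_distrib, Finset.sum_sub_distrib, ← Finset.mul_sum,
            ← Finset.mul_sum]
      _ = (∑ u : V, H.wv u * g u ^ 2) + c ^ 2 * W := by rw [horth', hWsum]; ring
  have hdensum : (∑ u : V, H.wv u * p u ^ 2) + (∑ u : V, H.wv u * q u ^ 2)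
      = ∑ u : V, H.wv u * (g u - c) ^ 2 := by
    rw [← Finset.sum_add_distrib]
    exact Finset.sum_congr rfl fun u _ => by rw [← hpq_sq u]; ring
  have hnum_p : ∑ e ∈ H.E, H.w e * H.edgeDisc p e ≤ ∑ e ∈ H.E, H.w e * H.edgeDisc g e := by
    apply H.num_le
    intro u v
    have h1 : |p u - p v| ≤ |g u - g v| := by
      have := abs_max_sub_max_le_abs (g u - c) (g v - c) 0
      rwa [sub_sub_sub_cancel_right] at this
    calc (p u - p v) ^ 2 = |p u - p v| ^ 2 := (sq_abs _).symm
      _ ≤ |g u - g v| ^ 2 := pow_le_pow_left₀ (abs_nonneg _) h1 2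
      _ = (g u - g v) ^ 2 := sq_abs _
  have hnum_q : ∑ e ∈ H.E, H.w e * H.edgeDisc q e ≤ ∑ e ∈ H.E, H.w e * H.edgeDisc g e := by
    apply H.num_le
    intro u v
    have h1 : |q u - q v| ≤ |g u - g v| := by
      have := abs_max_sub_max_le_abs (c - g u) (c - g v) 0
      rwa [sub_sub_sub_cancel_left, abs_sub_comm (g v) (g u)] at this
    calc (q u - q v) ^ 2 = |q u - q v| ^ 2 := (sq_abs _).symm
      _ ≤ |g u - g v| ^ 2 := pow_le_pow_left₀ (abs_nonneg _) h1 2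
      _ = (g u - g v) ^ 2 := sq_abs _
  have hsupp_p : W / 2 ≤ ∑ u ∈ univ.filter (fun u => p u = 0), H.wv u := by
    have hsplit : (∑ u ∈ univ.filter (fun u => g u ≤ c), H.wv u)
        + (∑ u ∈ univ.filter (fun u => c < g u), H.wv u) = W := by
      have := Finset.sum_filter_add_sum_filter_not univ (fun u => g u ≤ c) H.wv
      rw [hWsum]; simpa [not_le] using this
    have hsub : univ.filter (fun u => g u ≤ c) ⊆ univ.filter (fun u => p u = 0) := by
      intro u hu
      refine Finset.mem_filter.mpr ⟨Finset.mem_univ u, ?_⟩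
      have := (Finset.mem_filter.mp hu).2
      exact max_eq_right (by linarith)
    have := Finset.sum_le_sum_of_subset_of_nonneg hsub (fun u _ _ => (hw u).le)
    linarith
  have hsupp_q : W / 2 ≤ ∑ u ∈ univ.filter (fun u => q u = 0), H.wv u := by
    have hsplit : (∑ u ∈ univ.filter (fun u => g u < c), H.wv u)
        + (∑ u ∈ univ.filter (fun u => c ≤ g u), H.wv u) = W := by
      have := Finset.sum_filter_add_sum_filter_not univ (fun u => g u < c) H.wv
      rw [hWsum]; simpa [not_lt] using this
    have hsub : univ.filter (fun u => c ≤ g u) ⊆ univ.filter (fun u => q u = 0) := by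
      intro u hu
      refine Finset.mem_filter.mpr ⟨Finset.mem_univ u, ?_⟩
      have := (Finset.mem_filter.mp hu).2
      exact max_eq_right (by linarith)
    have := Finset.sum_le_sum_of_subset_of_nonneg hsub (fun u _ _ => (hw u).le)
    linarith
  -- choose the half with bigger denominator
  obtain ⟨f, hf0, hnumf, hdenf2, hsuppf⟩ : ∃ f : V → ℝ, (∀ u, 0 ≤ f u) ∧
      (∑ e ∈ H.E, H.w e * H.edgeDisc f e ≤ ∑ e ∈ H.E, H.w e * H.edgeDisc g e) ∧
      ((∑ u : V, H.wv u * g u ^ 2) / 2 ≤ ∑ u : V, H.wv u * f u ^ 2) ∧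
      W / 2 ≤ ∑ u ∈ univ.filter (fun u => f u = 0), H.wv u := by
    have hc2W : 0 ≤ c ^ 2 * W := mul_nonneg (sq_nonneg c) hWpos.le
    rcases le_total (∑ u : V, H.wv u * q u ^ 2) (∑ u : V, H.wv u * p u ^ 2) with h | h
    · exact ⟨p, hp0, hnum_p, by linarith, hsupp_p⟩
    · exact ⟨q, hq0, hnum_q, by linarith, hsupp_q⟩
  have hdenf : 0 < ∑ u : V, H.wv u * f u ^ 2 := lt_of_lt_of_le (by linarith) hdenf2
  have hSf : 0 < ∑ u : V, H.wv u * f u := by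
    have hfne : ∃ u, f u ≠ 0 := by
      by_contra hcon
      push_neg at hcon
      have : ∑ u : V, H.wv u * f u ^ 2 = 0 :=
        Finset.sum_eq_zero fun u _ => by rw [hcon u]; ring
      linarith
    obtain ⟨u, hu⟩ := hfne
    refine Finset.sum_pos' (fun v _ => mul_nonneg (hw v).le (hf0 v))
      ⟨u, Finset.mem_univ u, mul_pos (hw u) (lt_of_le_of_ne (hf0 u) (Ne.symm hu))⟩
  set β : ℝ := (∑ u : V, H.wv u * f u) / W with hβdef
  have hβ : 0 < β := div_pos hSf hWpos
  have hSfW : ∑ u : V, H.wv u * f u = β * W := by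
    rw [hβdef]; field_simp
  -- Cauchy-Schwarz bound
  have hβ2W : β ^ 2 * W ≤ (∑ u : V, H.wv u * f u ^ 2) / 2 := by
    set s := univ.filter (fun u => ¬ f u = 0) with hsdef
    have h1 : ∑ u : V, H.wv u * f u = ∑ u ∈ s, H.wv u * f u := by
      symm
      apply Finset.sum_subset (Finset.subset_univ s)
      intro u _ hu
      simp only [hsdef, Finset.mem_filter, Finset.mem_univ, true_and, not_not] at hu
      rw [hu]; ring
    have h2 : (∑ u ∈ s, H.wv u * f u) ^ 2
        ≤ (∑ u ∈ s, H.wv u) * (∑ u ∈ s, H.wv u * f u ^ 2) := by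
      calc (∑ u ∈ s, H.wv u * f u) ^ 2
          = (∑ u ∈ s, Real.sqrt (H.wv u) * (Real.sqrt (H.wv u) * f u)) ^ 2 := by
            congr 1
            exact Finset.sum_congr rfl fun u _ => by
              rw [← mul_assoc, Real.mul_self_sqrt (hw u).le]
        _ ≤ (∑ u ∈ s, Real.sqrt (H.wv u) ^ 2) * (∑ u ∈ s, (Real.sqrt (H.wv u) * f u) ^ 2) :=
            Finset.sum_mul_sq_le_sq_mul_sq s _ _
        _ = (∑ u ∈ s, H.wv u) * (∑ u ∈ s, H.wv u * f u ^ 2) := by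
            congr 1
            · exact Finset.sum_congr rfl fun u _ => Real.sq_sqrt (hw u).le
            · exact Finset.sum_congr rfl fun u _ => by
                rw [mul_pow, Real.sq_sqrt (hw u).le]
    have h3 : ∑ u ∈ s, H.wv u ≤ W / 2 := by
      have := Finset.sum_filter_add_sum_filter_not univ (fun u => f u = 0) H.wv
      rw [hWsum] at *
      have hsum : (∑ u ∈ univ.filter (fun u => f u = 0), H.wv u) + ∑ u ∈ s, H.wv u
          = ∑ u : V, H.wv u := this
      linarith
    have h4 : ∑ u ∈ s, H.wv u * f u ^ 2 ≤ ∑ u : V, H.wv u * f u ^ 2 :=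
      Finset.sum_le_sum_of_subset_of_nonneg (Finset.subset_univ s)
        (fun u _ _ => mul_nonneg (hw u).le (sq_nonneg _))
    have h5 : (∑ u : V, H.wv u * f u) ^ 2 ≤ (W / 2) * (∑ u : V, H.wv u * f u ^ 2) := by
      rw [h1]
      refine le_trans h2 (mul_le_mul h3 h4 ?_ (by linarith))
      exact Finset.sum_nonneg fun u _ => mul_nonneg (hw u).le (sq_nonneg _)
    rw [hSfW] at h5
    nlinarith [hWpos]
  have hden_h0 : ∑ u : V, H.wv u * (f u - β) ^ 2
      = (∑ u : V, H.wv u * f u ^ 2) - β ^ 2 * W := by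
    calc ∑ u : V, H.wv u * (f u - β) ^ 2
        = ∑ u : V, (H.wv u * f u ^ 2 - 2 * β * (H.wv u * f u) + β ^ 2 * H.wv u) :=
          Finset.sum_congr rfl fun u _ => by ring
      _ = (∑ u : V, H.wv u * f u ^ 2) - 2 * β * (∑ u : V, H.wv u * f u)
            + β ^ 2 * (∑ u : V, H.wv u) := by
          rw [Finset.sum_add_distrib, Finset.sum_sub_distrib, ← Finset.mul_sum,
            ← Finset.mul_sum]
      _ = (∑ u : V, H.wv u * f u ^ 2) - β ^ 2 * W := by rw [hSfW, hWsum]; ring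
  have hden_h0_pos : 0 < ∑ u : V, H.wv u * (f u - β) ^ 2 := by
    rw [hden_h0]; linarith
  set t : ℝ := 1 / (β * W) with htdef
  have ht : 0 < t := by positivity
  refine ⟨fun u => t * (f u - β), ?_, ?_, ?_, ?_, ?_⟩
  · -- nonzero
    intro hcon
    have : ∑ u : V, H.wv u * (f u - β) ^ 2 = 0 := by
      refine Finset.sum_eq_zero fun u _ => ?_
      have h1 : t * (f u - β) = 0 := congrFun hcon u
      have h2 : f u - β = 0 := by
        rcases mul_eq_zero.mp h1 with h | h
        · exact absurd h ht.ne'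
        · exact h
      rw [h2]; ring
    linarith
  · -- orthogonality
    show ∑ u : V, H.wv u * (t * (f u - β)) * 1 = 0
    calc ∑ u : V, H.wv u * (t * (f u - β)) * 1
        = ∑ u : V, t * (H.wv u * f u - β * H.wv u) :=
          Finset.sum_congr rfl fun u _ => by ring
      _ = t * ((∑ u : V, H.wv u * f u) - β * (∑ u : V, H.wv u)) := by
          rw [← Finset.mul_sum, Finset.sum_sub_distrib, ← Finset.mul_sum]
      _ = 0 := by rw [hSfW, hWsum]; ring
  · -- discrepancy bound
    have hdisc1 : H.disc (fun u => t * (f u - β)) = H.disc (fun u => f u - β) :=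
      H.disc_smul _ ht.ne'
    have hdisc2 : H.disc (fun u => f u - β)
        = (∑ e ∈ H.E, H.w e * H.edgeDisc f e)
          / ((∑ u : V, H.wv u * f u ^ 2) - β ^ 2 * W) := by
      rw [EWHypergraph.disc, hden_h0]
      congr 1
      exact Finset.sum_congr rfl fun e he => by
        rw [H.edgeDisc_shift f β (H.edge_nonempty e he)]
    rw [hdisc1, hdisc2]
    have hstep : (∑ e ∈ H.E, H.w e * H.edgeDisc f e)
        / ((∑ u : V, H.wv u * f u ^ 2) - β ^ 2 * W)
        ≤ (∑ e ∈ H.E, H.w e * H.edgeDisc g e) / ((∑ u : V, H.wv u * g u ^ 2) / 4) := by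
      apply div_le_div₀ (H.num_nonneg g) hnumf (by linarith)
      linarith
    have hfin : (∑ e ∈ H.E, H.w e * H.edgeDisc g e) / ((∑ u : V, H.wv u * g u ^ 2) / 4)
        = 4 * γ := by
      rw [hγeq, div_div_eq_mul_div, ← mul_div_assoc,
        mul_comm (∑ e ∈ H.E, H.w e * H.edgeDisc g e) 4]
    linarith
  · -- lower bound
    intro u
    have h1 : -β ≤ f u - β := by linarith [hf0 u]
    have h2 := mul_le_mul_of_nonneg_left h1 ht.le
    have h3 : t * (-β) = -(1 / W) := by
      rw [htdef]; field_simp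
    show -(1 / W) ≤ t * (f u - β)
    linarith
  · -- L1 bound
    have habs : ∀ u : V, H.wv u * |t * (f u - β)| = t * (H.wv u * |f u - β|) := by
      intro u
      rw [abs_mul, abs_of_pos ht]; ring
    have heq1 : ∑ u : V, H.wv u * |t * (f u - β)|
        = t * ∑ u : V, H.wv u * |f u - β| := by
      rw [Finset.mul_sum]
      exact Finset.sum_congr rfl fun u _ => habs u
    have heq2 : ∑ u ∈ univ.filter (fun u => f u = 0), H.wv u * |f u - β|
        = β * ∑ u ∈ univ.filter (fun u => f u = 0), H.wv u := by
      rw [Finset.mul_sum]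
      refine Finset.sum_congr rfl fun u hu => ?_
      have h0 : f u = 0 := (Finset.mem_filter.mp hu).2
      rw [h0, zero_sub, abs_neg, abs_of_pos hβ]; ring
    have hle1 : ∑ u ∈ univ.filter (fun u => f u = 0), H.wv u * |f u - β|
        ≤ ∑ u : V, H.wv u * |f u - β| :=
      Finset.sum_le_sum_of_subset_of_nonneg (Finset.subset_univ _)
        (fun u _ _ => mul_nonneg (hw u).le (abs_nonneg _))
    have hle2 : β * (W / 2) ≤ ∑ u ∈ univ.filter (fun u => f u = 0), H.wv u * |f u - β| := by
      rw [heq2]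
      exact mul_le_mul_of_nonneg_left hsuppf hβ.le
    have hfin : t * (β * (W / 2)) = 1 / 2 := by
      rw [htdef]; field_simp
    have : t * (β * (W / 2)) ≤ t * ∑ u : V, H.wv u * |f u - β| :=
      mul_le_mul_of_nonneg_left (le_trans hle2 hle1) ht.le
    rw [heq1]
    linarith
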